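/- Let G = (V,E) be a finite simple undirected graph with positive edge weights and unique shortest paths, let s, v, x, y be vertices with d_G(v,x) ≤ d_G(s,v), d_G(x,y) ≤ 2 · d_G(s,v), and d_G(y,s) ≤ 4 · d_G(s,v), and let f ∈ E be an edge such that s and v are connected in G − f, f lies on π(s,v), f lies on π(v,x), f does not lie on π(x,y), and f lies on π(y,s). Then d_{G−f}(v,x) + d_{G−f}(x,y) + d_{G−f}(y,s) ≤ 11 · d_{G−f}(s,v). (Case 6 in the proof of Lemma 4.1.) -/

import Mathlib

open scoped ENNReal

variable {V : Type*}

/-- The total weight of a walk: the sum of the weights of its edges (in `ℝ≥0∞`). -/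
noncomputable def walkWeight {G : SimpleGraph V} (wt : Sym2 V → NNReal)
    {u v : V} (p : G.Walk u v) : ℝ≥0∞ :=
  (p.edges.map (fun e => (wt e : ℝ≥0∞))).sum

/-- The weighted shortest-path distance: the infimum over all walks from `u` to `v`
of their total weight (in `ℝ≥0∞`, so it is `∞` if `u` and `v` are not connected). -/
noncomputable def wdist (G : SimpleGraph V) (wt : Sym2 V → NNReal) (u v : V) : ℝ≥0∞ :=
  ⨅ p : G.Walk u v, walkWeight wt p

/-- `G` has unique shortest paths: for every pair of connected vertices there is exactly
one walk of minimum total weight. -/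
def HasUniqueShortestPaths (G : SimpleGraph V) (wt : Sym2 V → NNReal) : Prop :=
  ∀ u v : V, G.Reachable u v →
    ∃! p : G.Walk u v, walkWeight wt p = wdist G wt u v

section Aux

variable [DecidableEq V] {G : SimpleGraph V} (wt : Sym2 V → NNReal)

lemma walkWeight_nil {u : V} : walkWeight wt (SimpleGraph.Walk.nil : G.Walk u u) = 0 := by
  simp [walkWeight]

lemma walkWeight_cons {u v w : V} (h : G.Adj u v) (p : G.Walk v w) :
    walkWeight wt (SimpleGraph.Walk.cons h p) = (wt s(u, v) : ℝ≥0∞) + walkWeight wt p := by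
  simp [walkWeight]

lemma walkWeight_append {u v w : V} (p : G.Walk u v) (q : G.Walk v w) :
    walkWeight wt (p.append q) = walkWeight wt p + walkWeight wt q := by
  simp [walkWeight]

lemma walkWeight_reverse {u v : V} (p : G.Walk u v) :
    walkWeight wt p.reverse = walkWeight wt p := by
  simp [walkWeight, List.sum_reverse]

lemma wdist_le_walkWeight {u v : V} (p : G.Walk u v) :
    wdist G wt u v ≤ walkWeight wt p :=
  iInf_le _ p

lemma wdist_triangle (u v w : V) :
    wdist G wt u w ≤ wdist G wt u v + wdist G wt v w := by
  simp only [wdist]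
  rw [ENNReal.iInf_add]
  refine le_iInf fun p => ?_
  rw [ENNReal.add_iInf]
  refine le_iInf fun q => ?_
  exact (wdist_le_walkWeight wt (p.append q)).trans_eq (walkWeight_append wt p q)

lemma wdist_symm (u v : V) : wdist G wt u v = wdist G wt v u := by
  have key : ∀ (a b : V), wdist G wt a b ≤ wdist G wt b a := by
    intro a b
    refine le_iInf fun p => ?_
    exact (wdist_le_walkWeight wt p.reverse).trans_eq (walkWeight_reverse wt p)
  exact le_antisymm (key u v) (key v u)

lemma walkWeight_transfer {u v : V} (p : G.Walk u v) {H : SimpleGraph V}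
    (hp : ∀ e ∈ p.edges, e ∈ H.edgeSet) :
    walkWeight wt (p.transfer H hp) = walkWeight wt p := by
  simp [walkWeight, SimpleGraph.Walk.edges_transfer]

lemma wdist_le_wdist_deleteEdges (s : Set (Sym2 V)) (u v : V) :
    wdist G wt u v ≤ wdist (G.deleteEdges s) wt u v := by
  refine le_iInf fun p => ?_
  have hp : ∀ e ∈ p.edges, e ∈ G.edgeSet := fun e he =>
    SimpleGraph.edgeSet_mono (G.deleteEdges_le s) (p.edges_subset_edgeSet he)
  exact (wdist_le_walkWeight wt (p.transfer G hp)).trans_eq (walkWeight_transfer wt p hp)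

lemma wdist_deleteEdges_le {f : Sym2 V} {u v : V} (p : G.Walk u v) (h : f ∉ p.edges) :
    wdist (G.deleteEdges {f}) wt u v ≤ walkWeight wt p := by
  have hp : ∀ e ∈ p.edges, e ∉ ({f} : Set (Sym2 V)) := by
    intro e he hef
    rw [Set.mem_singleton_iff] at hef
    exact h (hef ▸ he)
  refine (wdist_le_walkWeight wt (p.toDeleteEdges {f} hp)).trans_eq ?_
  exact walkWeight_transfer wt p _

lemma walkWeight_bypass_le {u v : V} (p : G.Walk u v) :
    walkWeight wt p.bypass ≤ walkWeight wt p := by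
  induction p with
  | nil => simp [SimpleGraph.Walk.bypass]
  | @cons a b c h q ih =>
    simp only [SimpleGraph.Walk.bypass]
    split_ifs with hs
    · have hsplit : walkWeight wt (q.bypass.takeUntil a hs) +
          walkWeight wt (q.bypass.dropUntil a hs) = walkWeight wt q.bypass := by
        rw [← walkWeight_append, SimpleGraph.Walk.take_spec]
      calc walkWeight wt (q.bypass.dropUntil a hs)
          ≤ walkWeight wt q.bypass := by
            rw [← hsplit]; exact le_add_self
        _ ≤ walkWeight wt q := ih
        _ ≤ walkWeight wt (SimpleGraph.Walk.cons h q) := by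
            rw [walkWeight_cons]; exact le_add_self
    · rw [walkWeight_cons, walkWeight_cons]
      exact add_le_add_right ih _

lemma min_isPath (huniq : HasUniqueShortestPaths G wt) {u z : V} (p : G.Walk u z)
    (hp : walkWeight wt p = wdist G wt u z) : p.IsPath := by
  obtain ⟨p₀, _, hun⟩ := huniq u z ⟨p⟩
  have hb : walkWeight wt p.bypass = wdist G wt u z :=
    le_antisymm ((walkWeight_bypass_le wt p).trans_eq hp) (wdist_le_walkWeight wt p.bypass)
  have : p = p.bypass := (hun p hp).trans (hun p.bypass hb).symm
  rw [this]
  exact p.bypass_isPath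

lemma split_walk (f : Sym2 V) {u z : V} (p : G.Walk u z) (ht : p.IsTrail)
    (hm : f ∈ p.edges) :
    ∃ (c d : V) (p₁ : G.Walk u c) (p₂ : G.Walk d z), f = s(c, d) ∧ f ∉ p₁.edges ∧
      f ∉ p₂.edges ∧ walkWeight wt p₁ + (wt f : ℝ≥0∞) + walkWeight wt p₂ = walkWeight wt p := by
  induction p with
  | nil => simp at hm
  | @cons a b c h q ih =>
    rw [SimpleGraph.Walk.edges_cons, List.mem_cons] at hm
    rw [SimpleGraph.Walk.isTrail_cons] at ht
    rcases hm with hm | hm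
    · refine ⟨a, b, SimpleGraph.Walk.nil, q, hm, by simp, ?_, ?_⟩
      · rw [hm]; exact ht.2
      · rw [walkWeight_nil, walkWeight_cons, hm, zero_add]
    · obtain ⟨cc, dd, p₁, p₂, hcd, h1, h2, hw⟩ := ih ht.1 hm
      have hne : f ≠ s(a, b) := fun hf => ht.2 (hf ▸ hm)
      refine ⟨cc, dd, SimpleGraph.Walk.cons h p₁, p₂, hcd, ?_, h2, ?_⟩
      · rw [SimpleGraph.Walk.edges_cons, List.mem_cons]
        rintro (hfe | hfe)
        · exact hne hfe
        · exact h1 hfe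
      · rw [walkWeight_cons, walkWeight_cons, ← hw]; ring

end Aux

theorem stmt16 [Fintype V] [DecidableEq V] (G : SimpleGraph V) (wt : Sym2 V → NNReal)
    (hwt : ∀ e ∈ G.edgeSet, 0 < wt e)
    (huniq : HasUniqueShortestPaths G wt)
    (s v x y : V)
    (hvx : wdist G wt v x ≤ wdist G wt s v)
    (hxy : wdist G wt x y ≤ 2 * wdist G wt s v)
    (hys : wdist G wt y s ≤ 4 * wdist G wt s v)
    (f : Sym2 V) (hf : f ∈ G.edgeSet)
    (hconn : (G.deleteEdges {f}).Reachable s v)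
    (qsv : G.Walk s v) (hqsv : walkWeight wt qsv = wdist G wt s v)
    (qvx : G.Walk v x) (hqvx : walkWeight wt qvx = wdist G wt v x)
    (qxy : G.Walk x y) (hqxy : walkWeight wt qxy = wdist G wt x y)
    (qys : G.Walk y s) (hqys : walkWeight wt qys = wdist G wt y s)
    (hf1 : f ∈ qsv.edges) (hf2 : f ∈ qvx.edges)
    (hf3 : f ∉ qxy.edges) (hf4 : f ∈ qys.edges) :
    wdist (G.deleteEdges {f}) wt v x + wdist (G.deleteEdges {f}) wt x y +
        wdist (G.deleteEdges {f}) wt y s ≤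
      11 * wdist (G.deleteEdges {f}) wt s v := by
  set G' := G.deleteEdges {f} with hG'
  set D := wdist G wt s v with hD
  set D' := wdist G' wt s v with hD'
  have hDD' : D ≤ D' := wdist_le_wdist_deleteEdges wt {f} s v
  -- split qsv
  obtain ⟨a, b, p₁, p₂, hab, hp₁, hp₂, hwsv⟩ :=
    split_walk wt f qsv (min_isPath wt huniq qsv hqsv).isTrail hf1
  rw [hqsv] at hwsv
  have hsa : wdist G' wt s a ≤ walkWeight wt p₁ := wdist_deleteEdges_le wt p₁ hp₁
  have hbv : wdist G' wt b v ≤ walkWeight wt p₂ := wdist_deleteEdges_le wt p₂ hp₂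
  have hsum_sv : walkWeight wt p₁ + walkWeight wt p₂ ≤ D := by
    calc walkWeight wt p₁ + walkWeight wt p₂
        ≤ walkWeight wt p₁ + (wt f : ℝ≥0∞) + walkWeight wt p₂ := by
          exact add_le_add_left (le_add_self.trans_eq (add_comm _ _)) _
      _ = D := hwsv
  -- the key bound on the distance between the endpoints of f in G'
  have hK : wdist G' wt a b ≤ D + D' := by
    calc wdist G' wt a b ≤ wdist G' wt a s + wdist G' wt s b := wdist_triangle wt a s b
      _ ≤ wdist G' wt a s + (wdist G' wt s v + wdist G' wt v b) :=
          add_le_add_right (wdist_triangle wt s v b) _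
      _ = wdist G' wt s a + (D' + wdist G' wt b v) := by
          rw [wdist_symm wt a s, wdist_symm wt v b]
      _ ≤ walkWeight wt p₁ + (D' + walkWeight wt p₂) :=
          add_le_add hsa (add_le_add_right hbv _)
      _ = (walkWeight wt p₁ + walkWeight wt p₂) + D' := by ring
      _ ≤ D + D' := add_le_add_left hsum_sv _
  have hKsymm : wdist G' wt b a ≤ D + D' := (wdist_symm wt b a).le.trans hK
  have hKpair : ∀ c d : V, f = s(c, d) → wdist G' wt c d ≤ D + D' := by
    intro c d hcd
    rw [hab, Sym2.eq_iff] at hcd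
    rcases hcd with ⟨rfl, rfl⟩ | ⟨rfl, rfl⟩
    · exact hK
    · exact hKsymm
  -- generic bound for a shortest walk through f
  have key : ∀ (u z : V) (p : G.Walk u z), walkWeight wt p = wdist G wt u z → f ∈ p.edges →
      wdist G' wt u z ≤ wdist G wt u z + (D + D') := by
    intro u z p hp hm
    obtain ⟨c, d, r₁, r₂, hcd, hr₁, hr₂, hw⟩ :=
      split_walk wt f p (min_isPath wt huniq p hp).isTrail hm
    rw [hp] at hw
    have hsum : walkWeight wt r₁ + walkWeight wt r₂ ≤ wdist G wt u z := by
      calc walkWeight wt r₁ + walkWeight wt r₂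
          ≤ walkWeight wt r₁ + (wt f : ℝ≥0∞) + walkWeight wt r₂ := by
            exact add_le_add_left (le_add_self.trans_eq (add_comm _ _)) _
        _ = wdist G wt u z := hw
    calc wdist G' wt u z ≤ wdist G' wt u c + wdist G' wt c z := wdist_triangle wt u c z
      _ ≤ wdist G' wt u c + (wdist G' wt c d + wdist G' wt d z) :=
          add_le_add_right (wdist_triangle wt c d z) _
      _ ≤ walkWeight wt r₁ + ((D + D') + walkWeight wt r₂) :=
          add_le_add (wdist_deleteEdges_le wt r₁ hr₁)
            (add_le_add (hKpair c d hcd) (wdist_deleteEdges_le wt r₂ hr₂))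
      _ = (walkWeight wt r₁ + walkWeight wt r₂) + (D + D') := by ring
      _ ≤ wdist G wt u z + (D + D') := add_le_add_left hsum _
  have hvx' : wdist G' wt v x ≤ 2 * D + D' := by
    calc wdist G' wt v x ≤ wdist G wt v x + (D + D') := key v x qvx hqvx hf2
      _ ≤ D + (D + D') := add_le_add_left hvx _
      _ = 2 * D + D' := by ring
  have hys' : wdist G' wt y s ≤ 5 * D + D' := by
    calc wdist G' wt y s ≤ wdist G wt y s + (D + D') := key y s qys hqys hf4
      _ ≤ 4 * D + (D + D') := add_le_add_left hys _
      _ = 5 * D + D' := by ring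
  have hxy' : wdist G' wt x y ≤ 2 * D := by
    calc wdist G' wt x y ≤ walkWeight wt qxy := wdist_deleteEdges_le wt qxy hf3
      _ = wdist G wt x y := hqxy
      _ ≤ 2 * D := hxy
  calc wdist G' wt v x + wdist G' wt x y + wdist G' wt y s
      ≤ (2 * D + D') + (2 * D) + (5 * D + D') := add_le_add (add_le_add hvx' hxy') hys'
    _ = 9 * D + 2 * D' := by ring
    _ ≤ 9 * D' + 2 * D' := add_le_add_left (mul_le_mul_right hDD' 9) _
    _ = 11 * D' := by ring
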